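/- Let Ω ⊂ ℝ² be open, x₀ ∈ Ω, d > 0 with the closed ball of radius d around x₀ contained in Ω, and let u, v ∈ C²(Ω) be harmonic in B_d(x₀) \ {x₀}. Then for each i ∈ {1,2} the quantity Q(θ) := −∫_{∂B_θ(x₀)} (∂v/∂ν)(∂u/∂x_i) dσ − ∫_{∂B_θ(x₀)} (∂u/∂ν)(∂v/∂x_i) dσ + ∫_{∂B_θ(x₀)} ⟨∇u, ∇v⟩ ν_i dσ is independent of θ ∈ (0, d]. -/

import Mathlib

open MeasureTheory Real

noncomputable def lap2 (u : EuclideanSpace ℝ (Fin 2) → ℝ) (x : EuclideanSpace ℝ (Fin 2)) : ℝ :=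
  ∑ i : Fin 2, fderiv ℝ (fun y => fderiv ℝ u y (EuclideanSpace.single i 1)) x (EuclideanSpace.single i 1)

noncomputable def unitv (t : ℝ) : EuclideanSpace ℝ (Fin 2) :=
  (WithLp.equiv 2 (Fin 2 → ℝ)).symm ![Real.cos t, Real.sin t]

noncomputable def circpt (x₀ : EuclideanSpace ℝ (Fin 2)) (θ t : ℝ) : EuclideanSpace ℝ (Fin 2) :=
  x₀ + θ • unitv t

/-- The quadratic boundary form Q_i(θ) on the circle ∂B_θ(x₀), written via the
arclength parametrization t ↦ x₀ + θ·(cos t, sin t) (dσ = θ dt, outward unit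
normal ν = (cos t, sin t), with i-th component ν_i = (unitv t) i). -/
noncomputable def Qform (u v : EuclideanSpace ℝ (Fin 2) → ℝ)
    (x₀ : EuclideanSpace ℝ (Fin 2)) (i : Fin 2) (θ : ℝ) : ℝ :=
  -(θ * ∫ t in (0:ℝ)..(2 * π),
      fderiv ℝ v (circpt x₀ θ t) (unitv t) *
        fderiv ℝ u (circpt x₀ θ t) (EuclideanSpace.single i 1))
  - (θ * ∫ t in (0:ℝ)..(2 * π),
      fderiv ℝ u (circpt x₀ θ t) (unitv t) *
        fderiv ℝ v (circpt x₀ θ t) (EuclideanSpace.single i 1))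
  + (θ * ∫ t in (0:ℝ)..(2 * π),
      (inner ℝ (gradient u (circpt x₀ θ t)) (gradient v (circpt x₀ θ t)) : ℝ) * unitv t i)

section QAux

open Metric Set Filter Topology intervalIntegral

local notation "E2" => EuclideanSpace ℝ (Fin 2)

noncomputable def ev2 (j : Fin 2) : E2 := EuclideanSpace.single j 1

noncomputable def perpv (t : ℝ) : E2 :=
  (WithLp.equiv 2 (Fin 2 → ℝ)).symm ![-Real.sin t, Real.cos t]

lemma unitv_eq (t : ℝ) : unitv t = Real.cos t • ev2 0 + Real.sin t • ev2 1 := by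
  ext j
  fin_cases j <;>
    simp [unitv, ev2, PiLp.add_apply, PiLp.smul_apply, EuclideanSpace.single_apply,
      WithLp.equiv_symm_apply]

lemma perpv_eq (t : ℝ) : perpv t = (-Real.sin t) • ev2 0 + Real.cos t • ev2 1 := by
  ext j
  fin_cases j <;>
    simp [perpv, ev2, PiLp.add_apply, PiLp.smul_apply, EuclideanSpace.single_apply,
      WithLp.equiv_symm_apply]

lemma unitv_apply (t : ℝ) (j : Fin 2) : unitv t j = ![Real.cos t, Real.sin t] j := rfl
lemma perpv_apply (t : ℝ) (j : Fin 2) : perpv t j = ![-Real.sin t, Real.cos t] j := rfl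

lemma norm_unitv (t : ℝ) : ‖unitv t‖ = 1 := by
  rw [EuclideanSpace.norm_eq]
  simp [unitv, WithLp.equiv_symm_apply, Fin.sum_univ_two]

lemma comb (t : ℝ) (j : Fin 2) :
    unitv t j • unitv t + perpv t j • perpv t = ev2 j := by
  ext j'
  have h := sin_sq_add_cos_sq t
  fin_cases j <;> fin_cases j' <;>
    · simp [unitv, perpv, ev2, PiLp.add_apply, PiLp.smul_apply, EuclideanSpace.single_apply,
        WithLp.equiv_symm_apply, smul_eq_mul]
      nlinarith [h]

lemma hasDerivAt_unitv (t : ℝ) : HasDerivAt unitv (perpv t) t := by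
  have : HasDerivAt (fun s => Real.cos s • ev2 0 + Real.sin s • ev2 1)
      ((-Real.sin t) • ev2 0 + Real.cos t • ev2 1) t :=
    ((Real.hasDerivAt_cos t).smul_const (ev2 0)).add ((Real.hasDerivAt_sin t).smul_const (ev2 1))
  rw [funext unitv_eq, perpv_eq]
  simpa [neg_smul] using this

lemma hasDerivAt_perpv_apply (t : ℝ) (j : Fin 2) :
    HasDerivAt (fun s => perpv s j) (-unitv t j) t := by
  fin_cases j
  · simpa [perpv_apply, unitv_apply] using (Real.hasDerivAt_sin t).fun_neg
  · simpa [perpv_apply, unitv_apply] using Real.hasDerivAt_cos t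

lemma continuous_unitv : Continuous unitv := by
  simp only [funext unitv_eq]
  fun_prop

lemma continuous_unitv_apply (j : Fin 2) : Continuous fun t => unitv t j := by
  fin_cases j <;>
    · simp only [unitv_apply, Matrix.cons_val_zero, Matrix.cons_val_one, Matrix.head_cons,
        Fin.zero_eta, Fin.mk_one]
      fun_prop

lemma continuous_perpv_apply (j : Fin 2) : Continuous fun t => perpv t j := by
  fin_cases j <;>
    · simp only [perpv_apply, Matrix.cons_val_zero, Matrix.cons_val_one, Matrix.head_cons,
        Fin.zero_eta, Fin.mk_one]
      fun_prop

lemma unitv_per : unitv (2 * π) = unitv 0 := by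
  ext j; fin_cases j <;> simp [unitv_apply]

lemma perpv_per : perpv (2 * π) = perpv 0 := by
  ext j; fin_cases j <;> simp [perpv_apply]

lemma hasDerivAt_circpt_theta (x₀ : E2) (t θ : ℝ) :
    HasDerivAt (fun θ => circpt x₀ θ t) (unitv t) θ := by
  simpa [circpt, one_smul] using (((hasDerivAt_id θ).smul_const (unitv t)).const_add x₀)

lemma hasDerivAt_circpt_t (x₀ : E2) (θ t : ℝ) :
    HasDerivAt (fun t => circpt x₀ θ t) (θ • perpv t) t :=
  (((hasDerivAt_unitv t).const_smul θ).const_add x₀)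

lemma dist_circpt (x₀ : E2) (θ t : ℝ) : dist (circpt x₀ θ t) x₀ = |θ| := by
  simp [circpt, dist_eq_norm, norm_smul, norm_unitv, abs_eq_self.mpr]

lemma circpt_ne (x₀ : E2) {θ : ℝ} (hθ : θ ≠ 0) (t : ℝ) : circpt x₀ θ t ≠ x₀ := by
  intro h
  have := dist_circpt x₀ θ t
  rw [h, dist_self] at this
  exact hθ (abs_eq_zero.mp this.symm)

lemma continuous_circpt (x₀ : E2) : Continuous fun p : ℝ × ℝ => circpt x₀ p.1 p.2 := by
  simp only [circpt]
  exact continuous_const.add (continuous_fst.smul (continuous_unitv.comp continuous_snd))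

lemma continuous_circpt_t (x₀ : E2) (θ : ℝ) : Continuous fun t : ℝ => circpt x₀ θ t :=
  (continuous_circpt x₀).comp (continuous_const.prodMk continuous_id)

lemma continuous_circpt_theta (x₀ : E2) (t : ℝ) : Continuous fun θ : ℝ => circpt x₀ θ t :=
  (continuous_circpt x₀).comp (continuous_id.prodMk continuous_const)

lemma circpt_per (x₀ : E2) (θ : ℝ) : circpt x₀ θ (2 * π) = circpt x₀ θ 0 := by
  simp [circpt, unitv_per]

/-- first-order partial derivative -/
noncomputable def Pd (w : E2 → ℝ) (j : Fin 2) (x : E2) : ℝ := fderiv ℝ w x (ev2 j)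

lemma lap2_eq (w : E2 → ℝ) (x : E2) :
    lap2 w x = ∑ j : Fin 2, fderiv ℝ (Pd w j) x (ev2 j) := rfl

/-- The conserved current. -/
noncomputable def Wf (u v : E2 → ℝ) (i j : Fin 2) (x : E2) : ℝ :=
  (if i = j then (1:ℝ) else 0) * (∑ k : Fin 2, Pd u k x * Pd v k x)
    - Pd u i x * Pd v j x - Pd v i x * Pd u j x

lemma grad_apply (u : E2 → ℝ) (x : E2) (j : Fin 2) :
    gradient u x j = fderiv ℝ u x (ev2 j) := by
  have h := InnerProductSpace.toDual_symm_apply (𝕜 := ℝ) (E := EuclideanSpace ℝ (Fin 2))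
    (x := ev2 j) (y := fderiv ℝ u x)
  rw [gradient, ← h, ev2, EuclideanSpace.inner_single_right]
  simp

lemma inner_grads (u v : E2 → ℝ) (x : E2) :
    (inner ℝ (gradient u x) (gradient v x) : ℝ) = ∑ k : Fin 2, Pd u k x * Pd v k x := by
  rw [PiLp.inner_apply]
  refine Finset.sum_congr rfl fun k _ => ?_
  rw [grad_apply, grad_apply]
  simp [Pd]
  ring

lemma fderiv_apply_unitv (w : E2 → ℝ) (x : E2) (t : ℝ) :
    fderiv ℝ w x (unitv t) = Real.cos t * Pd w 0 x + Real.sin t * Pd w 1 x := by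
  rw [unitv_eq]
  simp [Pd, smul_eq_mul]

lemma sum_Wf_mul (u v : E2 → ℝ) (i : Fin 2) (x : E2) (t : ℝ) :
    ∑ j : Fin 2, Wf u v i j x * unitv t j =
      -(fderiv ℝ v x (unitv t) * fderiv ℝ u x (EuclideanSpace.single i 1))
      - fderiv ℝ u x (unitv t) * fderiv ℝ v x (EuclideanSpace.single i 1)
      + (inner ℝ (gradient u x) (gradient v x) : ℝ) * unitv t i := by
  rw [inner_grads]
  have hu0 : fderiv ℝ u x (EuclideanSpace.single i 1) = Pd u i x := rfl
  have hv0 : fderiv ℝ v x (EuclideanSpace.single i 1) = Pd v i x := rfl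
  rw [hu0, hv0, fderiv_apply_unitv, fderiv_apply_unitv, Fin.sum_univ_two]
  simp only [Wf, Fin.sum_univ_two]
  fin_cases i <;>
    · simp only [Fin.zero_eta, Fin.mk_one, Fin.isValue, reduceIte,
        show ((0:Fin 2) = 1) = False from by simp, show ((1:Fin 2) = 0) = False from by simp,
        if_false, one_mul, zero_mul, unitv_apply, Matrix.cons_val_zero, Matrix.cons_val_one,
        Matrix.head_cons]
      ring

end QAux

section Smooth

open Metric Set Filter Topology intervalIntegral

local notation "E2" => EuclideanSpace ℝ (Fin 2)

variable {Ω : Set E2} {u v w : E2 → ℝ}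

lemma contDiffOn_Pd (hw : ContDiffOn ℝ 2 w Ω) (hΩ : IsOpen Ω) (j : Fin 2) :
    ContDiffOn ℝ 1 (Pd w j) Ω := by
  have h1 : ContDiffOn ℝ 1 (fun x => fderiv ℝ w x) Ω :=
    hw.fderiv_of_isOpen hΩ (by norm_num)
  exact (ContinuousLinearMap.apply ℝ ℝ (ev2 j)).contDiff.comp_contDiffOn h1

lemma continuousOn_fderiv_Pd (hw : ContDiffOn ℝ 2 w Ω) (hΩ : IsOpen Ω) (j : Fin 2) :
    ContinuousOn (fun x => fderiv ℝ (Pd w j) x) Ω :=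
  (contDiffOn_Pd hw hΩ j).continuousOn_fderiv_of_isOpen hΩ le_rfl

lemma diffAt_Pd (hw : ContDiffOn ℝ 2 w Ω) (hΩ : IsOpen Ω) (j : Fin 2) {x : E2} (hx : x ∈ Ω) :
    DifferentiableAt ℝ (Pd w j) x :=
  (((contDiffOn_Pd hw hΩ j) x hx).differentiableWithinAt one_ne_zero).differentiableAt (hΩ.mem_nhds hx)

lemma fderiv_Pd_symm (hw : ContDiffOn ℝ 2 w Ω) (hΩ : IsOpen Ω) {x : E2} (hx : x ∈ Ω)
    (j k : Fin 2) :
    fderiv ℝ (Pd w k) x (ev2 j) = fderiv ℝ (Pd w j) x (ev2 k) := by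
  have hca : ContDiffAt ℝ 2 w x := (hw x hx).contDiffAt (hΩ.mem_nhds hx)
  have hdf : DifferentiableAt ℝ (fderiv ℝ w) x :=
    (hca.fderiv_right (m := 1) le_rfl).differentiableAt one_ne_zero
  have key : ∀ m : Fin 2, fderiv ℝ (Pd w m) x =
      (ContinuousLinearMap.apply ℝ ℝ (ev2 m)).comp (fderiv ℝ (fderiv ℝ w) x) := by
    intro m
    exact ((ContinuousLinearMap.apply ℝ ℝ (ev2 m)).hasFDerivAt.comp x hdf.hasFDerivAt).fderiv
  have hsymm := hca.isSymmSndFDerivAt (by simp [minSmoothness_of_isRCLikeNormedField])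
  rw [key, key]
  simpa using hsymm (ev2 j) (ev2 k)

lemma contDiffOn_Wf (hu : ContDiffOn ℝ 2 u Ω) (hv : ContDiffOn ℝ 2 v Ω) (hΩ : IsOpen Ω)
    (i j : Fin 2) : ContDiffOn ℝ 1 (Wf u v i j) Ω := by
  have hS : ContDiffOn ℝ 1 (fun x => ∑ k : Fin 2, Pd u k x * Pd v k x) Ω := by
    apply ContDiffOn.sum
    intro k _
    exact (contDiffOn_Pd hu hΩ k).mul (contDiffOn_Pd hv hΩ k)
  exact ((contDiffOn_const.mul hS).sub
      ((contDiffOn_Pd hu hΩ i).mul (contDiffOn_Pd hv hΩ j))).sub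
      ((contDiffOn_Pd hv hΩ i).mul (contDiffOn_Pd hu hΩ j))

lemma continuousOn_Wf (hu : ContDiffOn ℝ 2 u Ω) (hv : ContDiffOn ℝ 2 v Ω) (hΩ : IsOpen Ω)
    (i j : Fin 2) : ContinuousOn (Wf u v i j) Ω :=
  (contDiffOn_Wf hu hv hΩ i j).continuousOn

lemma continuousOn_fderiv_Wf (hu : ContDiffOn ℝ 2 u Ω) (hv : ContDiffOn ℝ 2 v Ω) (hΩ : IsOpen Ω)
    (i j : Fin 2) : ContinuousOn (fun x => fderiv ℝ (Wf u v i j) x) Ω :=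
  (contDiffOn_Wf hu hv hΩ i j).continuousOn_fderiv_of_isOpen hΩ le_rfl

lemma hasFDerivAt_Wf (hu : ContDiffOn ℝ 2 u Ω) (hv : ContDiffOn ℝ 2 v Ω) (hΩ : IsOpen Ω)
    (i j : Fin 2) {x : E2} (hx : x ∈ Ω) :
    HasFDerivAt (Wf u v i j)
      ((if i = j then (1:ℝ) else 0) •
          (∑ k : Fin 2, (Pd u k x • fderiv ℝ (Pd v k) x + Pd v k x • fderiv ℝ (Pd u k) x))
        - (Pd u i x • fderiv ℝ (Pd v j) x + Pd v j x • fderiv ℝ (Pd u i) x)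
        - (Pd v i x • fderiv ℝ (Pd u j) x + Pd u j x • fderiv ℝ (Pd v i) x)) x := by
  have hmul : ∀ (a b : E2 → ℝ), DifferentiableAt ℝ a x → DifferentiableAt ℝ b x →
      HasFDerivAt (fun z => a z * b z) (a x • fderiv ℝ b x + b x • fderiv ℝ a x) x :=
    fun a b ha hb => ha.hasFDerivAt.mul hb.hasFDerivAt
  have hS : HasFDerivAt (fun z => ∑ k : Fin 2, Pd u k z * Pd v k z)
      (∑ k : Fin 2, (Pd u k x • fderiv ℝ (Pd v k) x + Pd v k x • fderiv ℝ (Pd u k) x)) x := by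
    apply HasFDerivAt.fun_sum
    intro k _
    exact hmul _ _ (diffAt_Pd hu hΩ k hx) (diffAt_Pd hv hΩ k hx)
  exact ((hS.const_mul _).sub
      (hmul _ _ (diffAt_Pd hu hΩ i hx) (diffAt_Pd hv hΩ j hx))).sub
      (hmul _ _ (diffAt_Pd hv hΩ i hx) (diffAt_Pd hu hΩ j hx))

lemma fderiv_Wf_apply (hu : ContDiffOn ℝ 2 u Ω) (hv : ContDiffOn ℝ 2 v Ω) (hΩ : IsOpen Ω)
    (i j : Fin 2) {x : E2} (hx : x ∈ Ω) (y : E2) :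
    fderiv ℝ (Wf u v i j) x y =
      (if i = j then (1:ℝ) else 0) *
          (∑ k : Fin 2, (Pd u k x * fderiv ℝ (Pd v k) x y + Pd v k x * fderiv ℝ (Pd u k) x y))
        - (Pd u i x * fderiv ℝ (Pd v j) x y + Pd v j x * fderiv ℝ (Pd u i) x y)
        - (Pd v i x * fderiv ℝ (Pd u j) x y + Pd u j x * fderiv ℝ (Pd v i) x y) := by
  rw [(hasFDerivAt_Wf hu hv hΩ i j hx).fderiv]
  by_cases h : i = j <;>
    simp [h, ContinuousLinearMap.sum_apply, smul_eq_mul, Finset.mul_sum]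

lemma div_Wf (hu : ContDiffOn ℝ 2 u Ω) (hv : ContDiffOn ℝ 2 v Ω) (hΩ : IsOpen Ω)
    (i : Fin 2) {x : E2} (hx : x ∈ Ω) (hlu : lap2 u x = 0) (hlv : lap2 v x = 0) :
    ∑ j : Fin 2, fderiv ℝ (Wf u v i j) x (ev2 j) = 0 := by
  rw [lap2_eq, Fin.sum_univ_two] at hlu hlv
  have hu01 := fderiv_Pd_symm hu hΩ hx 0 1
  have hv01 := fderiv_Pd_symm hv hΩ hx 0 1
  rw [Fin.sum_univ_two, fderiv_Wf_apply hu hv hΩ i 0 hx, fderiv_Wf_apply hu hv hΩ i 1 hx]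
  simp only [Fin.sum_univ_two]
  fin_cases i
  · simp only [Fin.zero_eta, Fin.mk_one, reduceIte, one_mul, zero_mul, Fin.isValue,
      show ((0:Fin 2) = 1) = False from by simp, show ((1:Fin 2) = 0) = False from by simp,
      if_false, mul_zero]
    linear_combination (-(Pd u 0 x)) * hlv + (-(Pd v 0 x)) * hlu +
      (Pd u 1 x) * hv01 + (Pd v 1 x) * hu01
  · simp only [Fin.zero_eta, Fin.mk_one, reduceIte, one_mul, zero_mul, Fin.isValue,
      show ((0:Fin 2) = 1) = False from by simp, show ((1:Fin 2) = 0) = False from by simp,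
      if_false, mul_zero]
    linear_combination (-(Pd u 1 x)) * hlv + (-(Pd v 1 x)) * hlu +
      (-(Pd u 0 x)) * hv01 + (-(Pd v 0 x)) * hu01

/-- evaluation of a continuous-linear-map-valued continuous map along continuous curves -/
lemma cont_ev {F : E2 → E2 →L[ℝ] ℝ} {s : Set ℝ} (hF : ContinuousOn F Ω) {g : ℝ → E2}
    (hg : Continuous g) (hmap : ∀ t ∈ s, g t ∈ Ω) {h : ℝ → E2} (hh : Continuous h) :
    ContinuousOn (fun t => F (g t) (h t)) s :=
  isBoundedBilinearMap_apply.continuous.comp_continuousOn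
    ((hF.comp hg.continuousOn hmap).prodMk hh.continuousOn)

lemma cont_ev2 {F : E2 → E2 →L[ℝ] ℝ} {s : Set (ℝ × ℝ)} (hF : ContinuousOn F Ω)
    {g : ℝ × ℝ → E2} (hg : Continuous g) (hmap : ∀ p ∈ s, g p ∈ Ω) {h : ℝ × ℝ → E2}
    (hh : Continuous h) : ContinuousOn (fun p => F (g p) (h p)) s :=
  isBoundedBilinearMap_apply.continuous.comp_continuousOn
    ((hF.comp hg.continuousOn hmap).prodMk hh.continuousOn)

end Smooth

section Harm

open Metric Set Filter Topology intervalIntegral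

local notation "E2" => EuclideanSpace ℝ (Fin 2)

variable {Ω : Set E2} {w : E2 → ℝ}

lemma continuousOn_lap2 (hw : ContDiffOn ℝ 2 w Ω) (hΩ : IsOpen Ω) :
    ContinuousOn (lap2 w) Ω := by
  have : ContinuousOn (fun x => ∑ j : Fin 2, fderiv ℝ (Pd w j) x (ev2 j)) Ω := by
    apply continuousOn_finset_sum
    intro j _
    exact isBoundedBilinearMap_apply.continuous.comp_continuousOn
      ((continuousOn_fderiv_Pd hw hΩ j).prodMk continuousOn_const)
  exact this.congr fun x _ => lap2_eq w x

lemma lap2_zero_Ioc {x₀ : E2} {d : ℝ} (hd : 0 < d) (hΩ : IsOpen Ω)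
    (hball : closedBall x₀ d ⊆ Ω) (hw : ContDiffOn ℝ 2 w Ω)
    (hharm : ∀ x ∈ ball x₀ d \ {x₀}, lap2 w x = 0)
    {θ : ℝ} (hθ : θ ∈ Set.Ioc 0 d) (t : ℝ) : lap2 w (circpt x₀ θ t) = 0 := by
  rcases lt_or_eq_of_le hθ.2 with hlt | heq
  · apply hharm
    constructor
    · rw [mem_ball, dist_circpt, abs_of_pos hθ.1]; exact hlt
    · simpa using circpt_ne x₀ (ne_of_gt hθ.1) t
  · subst heq
    set f : ℝ → ℝ := fun s => lap2 w (circpt x₀ s t) with hf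
    have hmem : circpt x₀ θ t ∈ Ω := by
      apply hball
      rw [mem_closedBall, dist_circpt, abs_of_pos hθ.1]
    have hcf : ContinuousAt f θ :=
      ContinuousAt.comp (x := θ) (g := lap2 w) (f := fun s => circpt x₀ s t)
        ((continuousOn_lap2 hw hΩ).continuousAt (hΩ.mem_nhds hmem))
        ((continuous_circpt_theta x₀ t).continuousAt)
    have h1 : Tendsto f (𝓝[<] θ) (𝓝 (f θ)) := hcf.tendsto.mono_left nhdsWithin_le_nhds
    have h2 : Tendsto f (𝓝[<] θ) (𝓝 0) := by
      have hev : ∀ᶠ s in 𝓝[<] θ, f s = 0 := by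
        filter_upwards [Ioo_mem_nhdsLT_of_mem (show θ ∈ Ioc 0 θ from ⟨hθ.1, le_rfl⟩)] with s hs
        apply hharm
        constructor
        · rw [mem_ball, dist_circpt, abs_of_pos hs.1]; exact hs.2
        · simpa using circpt_ne x₀ (ne_of_gt hs.1) t
      exact Tendsto.congr' (hev.mono fun s hs => hs.symm) tendsto_const_nhds
    exact tendsto_nhds_unique h1 h2

end Harm

section Qeq

open Metric Set Filter Topology intervalIntegral

local notation "E2" => EuclideanSpace ℝ (Fin 2)

variable {Ω : Set E2} {u v : E2 → ℝ}

lemma Qform_eq (hu : ContDiffOn ℝ 2 u Ω) (hv : ContDiffOn ℝ 2 v Ω) (hΩ : IsOpen Ω)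
    {x₀ : E2} {θ : ℝ} (hmem : ∀ t : ℝ, circpt x₀ θ t ∈ Ω) (i : Fin 2) :
    Qform u v x₀ i θ =
      θ * ∫ t in (0:ℝ)..(2 * π), ∑ j : Fin 2, Wf u v i j (circpt x₀ θ t) * unitv t j := by
  have hfdu : ContinuousOn (fun x => fderiv ℝ u x) Ω :=
    hu.continuousOn_fderiv_of_isOpen hΩ (by norm_num)
  have hfdv : ContinuousOn (fun x => fderiv ℝ v x) Ω :=
    hv.continuousOn_fderiv_of_isOpen hΩ (by norm_num)
  set c : ℝ → E2 := fun t => circpt x₀ θ t with hc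
  have hcc : Continuous c := continuous_circpt_t x₀ θ
  set A : ℝ → ℝ := fun t => fderiv ℝ v (c t) (unitv t) *
      fderiv ℝ u (c t) (EuclideanSpace.single i 1) with hA
  set B : ℝ → ℝ := fun t => fderiv ℝ u (c t) (unitv t) *
      fderiv ℝ v (c t) (EuclideanSpace.single i 1) with hB
  set C : ℝ → ℝ := fun t =>
      (inner ℝ (gradient u (c t)) (gradient v (c t)) : ℝ) * unitv t i with hC
  have hAc : ContinuousOn A (Set.uIcc 0 (2 * π)) :=
    (cont_ev hfdv hcc (fun t _ => hmem t) continuous_unitv).mul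
      (cont_ev hfdu hcc (fun t _ => hmem t) continuous_const)
  have hBc : ContinuousOn B (Set.uIcc 0 (2 * π)) :=
    (cont_ev hfdu hcc (fun t _ => hmem t) continuous_unitv).mul
      (cont_ev hfdv hcc (fun t _ => hmem t) continuous_const)
  have hCc : ContinuousOn C (Set.uIcc 0 (2 * π)) := by
    have : ContinuousOn (fun t => (∑ k : Fin 2, Pd u k (c t) * Pd v k (c t)) * unitv t i)
        (Set.uIcc 0 (2 * π)) := by
      apply ContinuousOn.mul
      · apply continuousOn_finset_sum
        intro k _
        exact (((contDiffOn_Pd hu hΩ k).continuousOn).comp hcc.continuousOn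
            (fun t _ => hmem t)).mul
          (((contDiffOn_Pd hv hΩ k).continuousOn).comp hcc.continuousOn (fun t _ => hmem t))
      · exact (continuous_unitv_apply i).continuousOn
    exact this.congr fun t _ => by rw [hC]; simp only [inner_grads]
  have hAi : IntervalIntegrable A volume 0 (2 * π) := hAc.intervalIntegrable
  have hBi : IntervalIntegrable B volume 0 (2 * π) := hBc.intervalIntegrable
  have hCi : IntervalIntegrable C volume 0 (2 * π) := hCc.intervalIntegrable
  have hsum : Set.EqOn (fun t => ∑ j : Fin 2, Wf u v i j (c t) * unitv t j)
      (fun t => -A t - B t + C t) (Set.uIcc 0 (2 * π)) := by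
    intro t _
    exact sum_Wf_mul u v i (c t) t
  rw [intervalIntegral.integral_congr hsum]
  rw [intervalIntegral.integral_add
      (show IntervalIntegrable (fun t => -A t - B t) volume 0 (2 * π) from hAi.neg.sub hBi) hCi,
    intervalIntegral.integral_sub
      (show IntervalIntegrable (fun t => -A t) volume 0 (2 * π) from hAi.neg) hBi,
    intervalIntegral.integral_neg]
  simp only [Qform]
  ring

end Qeq

section Gfun

open Metric Set Filter Topology intervalIntegral

local notation "E2" => EuclideanSpace ℝ (Fin 2)

noncomputable def Gfun (u v : E2 → ℝ) (x₀ : E2) (i : Fin 2) (θ t : ℝ) : ℝ :=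
  ∑ j : Fin 2, Wf u v i j (circpt x₀ θ t) * unitv t j

noncomputable def Gfun' (u v : E2 → ℝ) (x₀ : E2) (i : Fin 2) (θ t : ℝ) : ℝ :=
  ∑ j : Fin 2, fderiv ℝ (Wf u v i j) (circpt x₀ θ t) (unitv t) * unitv t j

variable {Ω : Set E2} {u v : E2 → ℝ} {x₀ : E2} {i : Fin 2}

lemma cont_G (hu : ContDiffOn ℝ 2 u Ω) (hv : ContDiffOn ℝ 2 v Ω) (hΩ : IsOpen Ω)
    {θ : ℝ} (hmem : ∀ t : ℝ, circpt x₀ θ t ∈ Ω) : Continuous (Gfun u v x₀ i θ) := by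
  rw [← continuousOn_univ]
  apply continuousOn_finset_sum
  intro j _
  exact ((continuousOn_Wf hu hv hΩ i j).comp (continuous_circpt_t x₀ θ).continuousOn
    (fun t _ => hmem t)).mul (continuous_unitv_apply j).continuousOn

lemma cont_G' (hu : ContDiffOn ℝ 2 u Ω) (hv : ContDiffOn ℝ 2 v Ω) (hΩ : IsOpen Ω)
    {θ : ℝ} (hmem : ∀ t : ℝ, circpt x₀ θ t ∈ Ω) : Continuous (Gfun' u v x₀ i θ) := by
  rw [← continuousOn_univ]
  apply continuousOn_finset_sum
  intro j _
  exact (cont_ev (continuousOn_fderiv_Wf hu hv hΩ i j) (continuous_circpt_t x₀ θ)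
    (fun t _ => hmem t) continuous_unitv).mul (continuous_unitv_apply j).continuousOn

lemma hasDerivAt_G_theta (hu : ContDiffOn ℝ 2 u Ω) (hv : ContDiffOn ℝ 2 v Ω) (hΩ : IsOpen Ω)
    {θ t : ℝ} (hmem : circpt x₀ θ t ∈ Ω) :
    HasDerivAt (fun θ => Gfun u v x₀ i θ t) (Gfun' u v x₀ i θ t) θ := by
  apply HasDerivAt.fun_sum
  intro j _
  exact (((hasFDerivAt_Wf hu hv hΩ i j hmem).differentiableAt.hasFDerivAt).comp_hasDerivAt θ
    (hasDerivAt_circpt_theta x₀ t θ)).mul_const (unitv t j)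

lemma potential_hasDerivAt (hu : ContDiffOn ℝ 2 u Ω) (hv : ContDiffOn ℝ 2 v Ω) (hΩ : IsOpen Ω)
    {θ t : ℝ} (hmem : circpt x₀ θ t ∈ Ω)
    (hlu : lap2 u (circpt x₀ θ t) = 0) (hlv : lap2 v (circpt x₀ θ t) = 0) :
    HasDerivAt (fun s => -∑ j : Fin 2, Wf u v i j (circpt x₀ θ s) * perpv s j)
      (Gfun u v x₀ i θ t + θ * Gfun' u v x₀ i θ t) t := by
  set x : E2 := circpt x₀ θ t with hx
  have hdW : ∀ j : Fin 2, HasDerivAt (fun r => Wf u v i j (circpt x₀ θ r))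
      (fderiv ℝ (Wf u v i j) x (θ • perpv t)) t := fun j => by
    have := ((hasFDerivAt_Wf hu hv hΩ i j hmem).differentiableAt.hasFDerivAt).comp_hasDerivAt t
      (hasDerivAt_circpt_t x₀ θ t)
    exact this
  have hsum : HasDerivAt (fun r => ∑ j : Fin 2, Wf u v i j (circpt x₀ θ r) * perpv r j)
      (∑ j : Fin 2, (fderiv ℝ (Wf u v i j) x (θ • perpv t) * perpv t j +
        Wf u v i j x * (-unitv t j))) t :=
    HasDerivAt.fun_sum fun j _ => (hdW j).mul (hasDerivAt_perpv_apply t j)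
  have heq : Gfun u v x₀ i θ t + θ * Gfun' u v x₀ i θ t =
      -∑ j : Fin 2, (fderiv ℝ (Wf u v i j) x (θ • perpv t) * perpv t j +
        Wf u v i j x * (-unitv t j)) := by
    have hdiv := div_Wf hu hv hΩ i hmem hlu hlv
    have hcombe : ∀ j : Fin 2, fderiv ℝ (Wf u v i j) x (ev2 j) =
        unitv t j * fderiv ℝ (Wf u v i j) x (unitv t) +
        perpv t j * fderiv ℝ (Wf u v i j) x (perpv t) := by
      intro j
      rw [← comb t j]
      simp [map_add, ContinuousLinearMap.map_smul, smul_eq_mul]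
    simp only [hcombe] at hdiv
    simp only [Gfun, Gfun', ContinuousLinearMap.map_smul, smul_eq_mul, Fin.sum_univ_two] at *
    linear_combination θ * hdiv
  exact heq ▸ hsum.neg

lemma integral_G_plus (hu : ContDiffOn ℝ 2 u Ω) (hv : ContDiffOn ℝ 2 v Ω) (hΩ : IsOpen Ω)
    {θ : ℝ} (hmem : ∀ t : ℝ, circpt x₀ θ t ∈ Ω)
    (hlu : ∀ t : ℝ, lap2 u (circpt x₀ θ t) = 0) (hlv : ∀ t : ℝ, lap2 v (circpt x₀ θ t) = 0) :
    ∫ t in (0:ℝ)..(2 * π), (Gfun u v x₀ i θ t + θ * Gfun' u v x₀ i θ t) = 0 := by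
  have hint : IntervalIntegrable (fun t => Gfun u v x₀ i θ t + θ * Gfun' u v x₀ i θ t)
      volume 0 (2 * π) :=
    ((cont_G hu hv hΩ hmem).add (continuous_const.mul (cont_G' hu hv hΩ hmem))).intervalIntegrable _ _
  rw [intervalIntegral.integral_eq_sub_of_hasDerivAt
    (f := fun s => -∑ j : Fin 2, Wf u v i j (circpt x₀ θ s) * perpv s j)
    (fun s _ => potential_hasDerivAt hu hv hΩ (hmem s) (hlu s) (hlv s)) hint]
  rw [circpt_per]
  simp [perpv_per]

end Gfun

theorem Qform_indep_of_radius (Ω : Set (EuclideanSpace ℝ (Fin 2))) (hΩ : IsOpen Ω)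
    (x₀ : EuclideanSpace ℝ (Fin 2)) (hx₀ : x₀ ∈ Ω) (d : ℝ) (hd : 0 < d)
    (hball : Metric.closedBall x₀ d ⊆ Ω)
    (u v : EuclideanSpace ℝ (Fin 2) → ℝ)
    (hu : ContDiffOn ℝ 2 u Ω) (hv : ContDiffOn ℝ 2 v Ω)
    (huh : ∀ x ∈ Metric.ball x₀ d \ {x₀}, lap2 u x = 0)
    (hvh : ∀ x ∈ Metric.ball x₀ d \ {x₀}, lap2 v x = 0) (i : Fin 2) :
    ∀ θ₁ ∈ Set.Ioc 0 d, ∀ θ₂ ∈ Set.Ioc 0 d,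
      Qform u v x₀ i θ₁ = Qform u v x₀ i θ₂ := by
  classical
  obtain ⟨δ, hδpos, hδ⟩ := (isCompact_closedBall x₀ d).exists_thickening_subset_open hΩ hball
  set d' : ℝ := d + δ / 2 with hd'def
  clear_value d'
  have hdd' : d < d' := by rw [hd'def]; linarith
  have hball' : Metric.closedBall x₀ d' ⊆ Ω := by
    intro y hy
    apply hδ
    rw [thickening_closedBall hδpos hd.le, Metric.mem_ball]
    rw [Metric.mem_closedBall] at hy
    calc dist y x₀ ≤ d' := hy
    _ < δ + d := by rw [hd'def]; linarith
  have hmemΩ : ∀ θ : ℝ, |θ| ≤ d' → ∀ t, circpt x₀ θ t ∈ Ω := fun θ hθ t =>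
    hball' (by rw [Metric.mem_closedBall, dist_circpt]; exact hθ)
  -- joint bound on G'
  have hA : IsCompact ((Set.Icc (-d') d') ×ˢ Set.Icc (0:ℝ) (2 * π)) :=
    isCompact_Icc.prod isCompact_Icc
  have hG'joint : ContinuousOn (fun p : ℝ × ℝ => Gfun' u v x₀ i p.1 p.2)
      ((Set.Icc (-d') d') ×ˢ Set.Icc (0:ℝ) (2 * π)) := by
    apply continuousOn_finset_sum
    intro j _
    apply ContinuousOn.mul
    · exact cont_ev2 (continuousOn_fderiv_Wf hu hv hΩ i j) (continuous_circpt x₀)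
        (fun p hp => hmemΩ p.1 (abs_le.mpr ⟨hp.1.1, hp.1.2⟩) p.2)
        (continuous_unitv.comp continuous_snd)
    · exact ((continuous_unitv_apply j).comp continuous_snd).continuousOn
  obtain ⟨Cb, hCb⟩ := hA.exists_bound_of_continuousOn hG'joint
  have hlapu : ∀ {θ : ℝ}, θ ∈ Set.Ioc 0 d → ∀ t : ℝ, lap2 u (circpt x₀ θ t) = 0 :=
    fun {θ} hθ t => lap2_zero_Ioc hd hΩ hball hu huh hθ t
  have hlapv : ∀ {θ : ℝ}, θ ∈ Set.Ioc 0 d → ∀ t : ℝ, lap2 v (circpt x₀ θ t) = 0 :=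
    fun {θ} hθ t => lap2_zero_Ioc hd hΩ hball hv hvh hθ t
  -- main derivative computation
  have key : ∀ θ₀ ∈ Set.Ioc 0 d, HasDerivAt
      (fun θ => θ * ∫ t in (0:ℝ)..(2 * π), Gfun u v x₀ i θ t) 0 θ₀ := by
    intro θ₀ hθ₀
    set ε : ℝ := min (θ₀ / 2) ((d' - d) / 2) with hεdef
    clear_value ε
    have hεpos : 0 < ε := by
      rw [hεdef]; exact lt_min (by linarith [hθ₀.1]) (by linarith)
    have hball_sub : ∀ θ ∈ Metric.ball θ₀ ε, 0 < θ ∧ θ ≤ d' := by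
      intro θ hθ
      rw [Metric.mem_ball, Real.dist_eq] at hθ
      obtain ⟨h1a, h1b⟩ := abs_lt.mp hθ
      have h2 : ε ≤ θ₀ / 2 := hεdef ▸ min_le_left _ _
      have h3 : ε ≤ (d' - d) / 2 := hεdef ▸ min_le_right _ _
      constructor
      · linarith [hθ₀.1]
      · linarith [hθ₀.2]
    have habs : ∀ θ ∈ Metric.ball θ₀ ε, |θ| ≤ d' := by
      intro θ hθ
      obtain ⟨h1, h2⟩ := hball_sub θ hθ
      rw [abs_of_pos h1]; exact h2
    have hmemself : θ₀ ∈ Metric.ball θ₀ ε := Metric.mem_ball_self hεpos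
    have hInt : HasDerivAt (fun θ => ∫ t in (0:ℝ)..(2 * π), Gfun u v x₀ i θ t)
        (∫ t in (0:ℝ)..(2 * π), Gfun' u v x₀ i θ₀ t) θ₀ := by
      refine (intervalIntegral.hasDerivAt_integral_of_dominated_loc_of_deriv_le
        (F := fun θ t => Gfun u v x₀ i θ t) (F' := fun θ t => Gfun' u v x₀ i θ t)
        (bound := fun _ => Cb) (Metric.ball_mem_nhds θ₀ hεpos) ?_ ?_ ?_ ?_ ?_ ?_).2
      · filter_upwards [Metric.ball_mem_nhds θ₀ hεpos] with θ hθ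
        exact (cont_G hu hv hΩ (hmemΩ θ (habs θ hθ))).aestronglyMeasurable.restrict
      · exact (cont_G hu hv hΩ (hmemΩ θ₀ (habs θ₀ hmemself))).intervalIntegrable _ _
      · exact (cont_G' hu hv hΩ (hmemΩ θ₀ (habs θ₀ hmemself))).aestronglyMeasurable.restrict
      · apply MeasureTheory.ae_of_all
        intro t ht θ hθ
        rw [Set.uIoc_of_le (by positivity : (0:ℝ) ≤ 2 * π)] at ht
        exact hCb (θ, t) ⟨abs_le.mp (habs θ hθ), ⟨ht.1.le, ht.2⟩⟩
      · exact intervalIntegrable_const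
      · apply MeasureTheory.ae_of_all
        intro t _ θ hθ
        exact hasDerivAt_G_theta hu hv hΩ (hmemΩ θ (habs θ hθ) t)
    have hmul := (hasDerivAt_id θ₀).mul hInt
    have hzero : 1 * (∫ t in (0:ℝ)..(2 * π), Gfun u v x₀ i θ₀ t) +
        id θ₀ * ∫ t in (0:ℝ)..(2 * π), Gfun' u v x₀ i θ₀ t = 0 := by
      have hint1 : IntervalIntegrable (fun t => Gfun u v x₀ i θ₀ t) volume 0 (2 * π) :=
        (cont_G hu hv hΩ (hmemΩ θ₀ (habs θ₀ hmemself))).intervalIntegrable _ _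
      have hint2 : IntervalIntegrable (fun t => θ₀ * Gfun' u v x₀ i θ₀ t) volume 0 (2 * π) :=
        (continuous_const.mul (cont_G' hu hv hΩ (hmemΩ θ₀ (habs θ₀ hmemself)))).intervalIntegrable _ _
      have := integral_G_plus (i := i) hu hv hΩ (hmemΩ θ₀ (habs θ₀ hmemself))
        (fun t => hlapu hθ₀ t) (fun t => hlapv hθ₀ t)
      rw [intervalIntegral.integral_add hint1 hint2, intervalIntegral.integral_const_mul] at this
      simpa using this
    rw [hzero] at hmul
    exact hmul
  -- transfer to Qform
  have hQd : ∀ θ₀ ∈ Set.Ioc 0 d, HasDerivAt (Qform u v x₀ i) 0 θ₀ := by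
    intro θ₀ hθ₀
    apply HasDerivAt.congr_of_eventuallyEq (key θ₀ hθ₀)
    have hnb : Set.Ioo (0:ℝ) d' ∈ nhds θ₀ := Ioo_mem_nhds hθ₀.1 (lt_of_le_of_lt hθ₀.2 hdd')
    filter_upwards [hnb] with θ hθ
    exact Qform_eq hu hv hΩ
      (fun t => hmemΩ θ (by rw [abs_of_pos hθ.1]; exact hθ.2.le) t) i
  -- constancy
  suffices hmono : ∀ a ∈ Set.Ioc 0 d, ∀ b ∈ Set.Ioc 0 d, a ≤ b →
      Qform u v x₀ i a = Qform u v x₀ i b by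
    intro θ₁ h1 θ₂ h2
    rcases le_total θ₁ θ₂ with h | h
    exacts [hmono θ₁ h1 θ₂ h2 h, (hmono θ₂ h2 θ₁ h1 h).symm]
  intro a ha b hb hab
  have hsub : Set.Icc a b ⊆ Set.Ioc 0 d := fun x hx =>
    ⟨lt_of_lt_of_le ha.1 hx.1, le_trans hx.2 hb.2⟩
  have hcont : ContinuousOn (Qform u v x₀ i) (Set.Icc a b) := fun x hx =>
    ((hQd x (hsub hx)).continuousAt).continuousWithinAt
  have hconst := constant_of_has_deriv_right_zero hcont
    (fun x hx => (hQd x (hsub (Set.Ico_subset_Icc_self hx))).hasDerivWithinAt)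
  exact (hconst b (Set.right_mem_Icc.mpr hab)).symm
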